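/- Let X, Y, Z be random variables with values in standard Borel spaces, with Z = φ(Y) for a measurable φ. Let λ be a measure on the target space of X. If the regular conditional distribution μ(y,·) of X given Y is absolutely continuous with respect to λ for L(Y)-a.e. y, then the regular conditional distribution μ'(z,·) of X given Z is absolutely continuous with respect to λ for L(Z)-a.e. z. -/

import Mathlib

open MeasureTheory ProbabilityTheory

/-- If the regular conditional distribution of `X` given `Y` is a.e. absolutely continuous
with respect to `λ`, and `Z = φ ∘ Y`, then the regular conditional distribution of `X`
given `Z` is a.e. absolutely continuous with respect to `λ`. -/
theorem stmt14 {Ω 𝔛 𝔜 ℨ : Type*} [MeasurableSpace Ω]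
    [MeasurableSpace 𝔛] [StandardBorelSpace 𝔛] [Nonempty 𝔛]
    [MeasurableSpace 𝔜] [StandardBorelSpace 𝔜]
    [MeasurableSpace ℨ] [StandardBorelSpace ℨ]
    (P : Measure Ω) [IsProbabilityMeasure P]
    (X : Ω → 𝔛) (Y : Ω → 𝔜) (φ : 𝔜 → ℨ)
    (hX : Measurable X) (hY : Measurable Y) (hφ : Measurable φ)
    (lam : Measure 𝔛)
    (hac : ∀ᵐ y ∂(P.map Y), (condDistrib X Y P) y ≪ lam) :
    ∀ᵐ z ∂(P.map (φ ∘ Y)), (condDistrib X (φ ∘ Y) P) z ≪ lam := by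
  have hΩ : Nonempty Ω := by
    by_contra h
    rw [not_nonempty_iff] at h
    have h1 := measure_univ (μ := P)
    rw [Set.univ_eq_empty_iff.mpr h, measure_empty] at h1
    exact zero_ne_one h1
  have h𝔜 : Nonempty 𝔜 := ⟨Y hΩ.some⟩
  have hZ : Measurable (φ ∘ Y) := hφ.comp hY
  set μk : ProbabilityTheory.Kernel 𝔜 𝔛 := condDistrib X Y P with hμk
  set νk : ProbabilityTheory.Kernel ℨ 𝔜 := condDistrib Y (φ ∘ Y) P with hνk
  -- disintegration identities
  have hA : P.map (fun ω => (Y ω, X ω)) = (P.map Y) ⊗ₘ μk := by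
    rw [hμk, condDistrib_def, ← Measure.fst_map_prodMk (X := Y) (Y := X) hX]
    exact ((P.map fun ω => (Y ω, X ω)).disintegrate _).symm
  have hB : P.map (fun ω => ((φ ∘ Y) ω, Y ω)) = (P.map (φ ∘ Y)) ⊗ₘ νk := by
    rw [hνk, condDistrib_def, ← Measure.fst_map_prodMk (X := φ ∘ Y) (Y := Y) hY]
    exact ((P.map fun ω => ((φ ∘ Y) ω, Y ω)).disintegrate _).symm
  -- the composed kernel
  have h_meas : ∀ {t : Set 𝔛}, MeasurableSet t → Measurable fun y => μk y t :=
    fun ht => Kernel.measurable_coe μk ht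
  have hcomp : P.map (fun ω => ((φ ∘ Y) ω, X ω)) = (P.map (φ ∘ Y)) ⊗ₘ (μk ∘ₖ νk) := by
    refine ext_of_generate_finite _ generateFrom_prod.symm isPiSystem_prod ?_ ?_
    · rintro u ⟨s, hs, t, ht, rfl⟩
      simp only [Set.mem_setOf_eq] at hs ht
      have h1 : (P.map fun ω => ((φ ∘ Y) ω, X ω)) (s ×ˢ t)
          = ∫⁻ y in φ ⁻¹' s, μk y t ∂(P.map Y) := by
        rw [Measure.map_apply (hZ.prodMk hX) (hs.prod ht)]
        have : (fun ω => ((φ ∘ Y) ω, X ω)) ⁻¹' (s ×ˢ t)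
            = (fun ω => (Y ω, X ω)) ⁻¹' ((φ ⁻¹' s) ×ˢ t) := by
          ext ω; simp [Function.comp]
        rw [this, ← Measure.map_apply (hY.prodMk hX) ((hφ hs).prod ht), hA,
          Measure.compProd_apply_prod (hφ hs) ht]
      have h2 : ((P.map (φ ∘ Y)) ⊗ₘ (μk ∘ₖ νk)) (s ×ˢ t)
          = ∫⁻ y in φ ⁻¹' s, μk y t ∂(P.map Y) := by
        rw [Measure.compProd_apply_prod hs ht]
        have hre : ∫⁻ z in s, (μk ∘ₖ νk) z t ∂(P.map (φ ∘ Y))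
            = ∫⁻ z in s, ∫⁻ y, μk y t ∂(νk z) ∂(P.map (φ ∘ Y)) := by
          refine lintegral_congr fun z => ?_
          rw [Kernel.comp_apply' _ _ _ ht]
        rw [hre]
        have hms : Measurable fun p : ℨ × 𝔜 => μk p.2 t := (h_meas ht).comp measurable_snd
        have := Measure.setLIntegral_compProd (μ := P.map (φ ∘ Y)) (κ := νk) hms hs
          MeasurableSet.univ
        simp only [Measure.restrict_univ, setLIntegral_univ] at this
        rw [← this, ← hB, setLIntegral_map (hs.prod MeasurableSet.univ) hms (hZ.prodMk hY)]
        have hpre : (fun ω => ((φ ∘ Y) ω, Y ω)) ⁻¹' (s ×ˢ Set.univ) = Y ⁻¹' (φ ⁻¹' s) := by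
          ext ω; simp [Function.comp]
        rw [hpre, ← setLIntegral_map (hφ hs) (h_meas ht) hY]
      rw [h1, h2]
    · rw [Measure.map_apply (hZ.prodMk hX) MeasurableSet.univ, Measure.compProd_apply_univ]
      simp [Measure.map_apply hZ MeasurableSet.univ]
  have hκ : ∀ᵐ z ∂(P.map (φ ∘ Y)), (μk ∘ₖ νk) z = condDistrib X (φ ∘ Y) P z :=
    (condDistrib_ae_eq_of_measure_eq_compProd (φ ∘ Y) hX.aemeasurable hcomp).symm
  -- a null set outside which μk y ≪ lam
  obtain ⟨N, hsub, hNm, hNnull⟩ :=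
    exists_measurable_superset_of_null (ae_iff.mp hac)
  have hN : ∀ y ∉ N, μk y ≪ lam := fun y hy => by
    by_contra h
    exact hy (hsub h)
  -- a.e. z, νk z N = 0
  have hν_null : ∀ᵐ z ∂(P.map (φ ∘ Y)), νk z N = 0 := by
    have hint : ∫⁻ z, νk z N ∂(P.map (φ ∘ Y)) = 0 := by
      rw [← setLIntegral_univ, ← Measure.compProd_apply_prod MeasurableSet.univ hNm, ← hB,
        Measure.map_apply (hZ.prodMk hY) (MeasurableSet.univ.prod hNm)]
      have : (fun ω => ((φ ∘ Y) ω, Y ω)) ⁻¹' (Set.univ ×ˢ N) = Y ⁻¹' N := by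
        ext ω; simp
      rw [this, ← Measure.map_apply hY hNm, hNnull]
    have := (lintegral_eq_zero_iff (Kernel.measurable_coe νk hNm)).mp hint
    filter_upwards [this] with z hz using hz
  filter_upwards [hκ, hν_null] with z hz hzN
  rw [← hz]
  refine Measure.AbsolutelyContinuous.mk fun s hs hs0 => ?_
  rw [Kernel.comp_apply' _ _ _ hs]
  have hae : ∀ᵐ y ∂(νk z), μk y s = 0 := by
    have hNae : ∀ᵐ y ∂(νk z), y ∉ N := by
      rw [ae_iff]
      simpa using hzN
    filter_upwards [hNae] with y hy using (hN y hy) hs0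
  rw [lintegral_congr_ae hae, lintegral_zero]
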